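/- Let p, d be coprime, G = ⟨a⟩ × ⟨b⟩ with ord(a)=p, ord(b)=d. Define δ_2 : Z[G]z_1 ⊕ Z[G]z_2 → Z[G]z_0 by δ_2(z_1) = (b-1)z_0, δ_2(z_2) = (a-1)z_0. Then ker(δ_2) is generated as a Z[G]-module by the three elements (a-1)z_1 - (b-1)z_2, T_b·z_1, and T_a·z_2, where T_a = Σ_{i=0}^{p-1}a^i and T_b = Σ_{j=0}^{d-1}b^j. -/

import Mathlib

open Finset

namespace KernelDeltaTwoAux

open Polynomial MonoidAlgebra

variable {G : Type*} [CommGroup G]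

noncomputable def phi (a b : G) : Polynomial (Polynomial ℤ) →+* MonoidAlgebra ℤ G :=
  eval₂RingHom (eval₂RingHom (algebraMap ℤ (MonoidAlgebra ℤ G)) (of ℤ G a)) (of ℤ G b)

lemma phi_CX (a b : G) : phi a b (C X) = of ℤ G a := by
  simp [phi]

lemma phi_X (a b : G) : phi a b X = of ℤ G b := by
  simp [phi]

lemma phi_C (a b : G) (q : Polynomial ℤ) :
    phi a b (C q) = eval₂ (algebraMap ℤ (MonoidAlgebra ℤ G)) (of ℤ G a) q := by
  simp [phi]

lemma inv_mem_closure_aux {x : G} {S : Set G} (hx : x ∈ S) (hn : orderOf x ≠ 0) :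
    x⁻¹ ∈ Submonoid.closure S := by
  have h1 : x * x ^ (orderOf x - 1) = 1 := by
    rw [← pow_succ', Nat.sub_add_cancel (Nat.one_le_iff_ne_zero.mpr hn), pow_orderOf_eq_one]
  rw [inv_eq_of_mul_eq_one_right h1]
  exact pow_mem (Submonoid.subset_closure hx) _

lemma mem_monoid_closure {a b : G} (hA : orderOf a ≠ 0) (hB : orderOf b ≠ 0)
    (hgen : ∀ g : G, g ∈ Subgroup.closure {a, b}) (g : G) :
    g ∈ Submonoid.closure ({a, b} : Set G) := by
  let H : Subgroup G :=
    { Submonoid.closure ({a, b} : Set G) with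
      inv_mem' := by
        intro x hx
        induction hx using Submonoid.closure_induction with
        | mem y hy =>
          rcases hy with rfl | rfl
          · exact inv_mem_closure_aux (by simp) hA
          · exact inv_mem_closure_aux (by simp) hB
        | one => rw [inv_one]; exact one_mem (Submonoid.closure ({a, b} : Set G))
        | mul y z hy hz ihy ihz => rw [mul_inv_rev]; exact Submonoid.mul_mem _ ihz ihy }
  have : Subgroup.closure ({a, b} : Set G) ≤ H :=
    (Subgroup.closure_le H).mpr (fun x hx => Submonoid.subset_closure hx)
  exact this (hgen g)

lemma phi_surjective {a b : G} (hA : orderOf a ≠ 0) (hB : orderOf b ≠ 0)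
    (hgen : ∀ g : G, g ∈ Subgroup.closure {a, b}) :
    Function.Surjective (phi a b) := by
  have hof : ∀ g : G, of ℤ G g ∈ (phi a b).range := by
    intro g
    have hg := mem_monoid_closure hA hB hgen g
    induction hg using Submonoid.closure_induction with
    | mem y hy =>
      rcases hy with rfl | rfl
      · exact ⟨C X, phi_CX _ _⟩
      · exact ⟨X, phi_X _ _⟩
    | one => rw [map_one]; exact one_mem _
    | mul y z hy hz ihy ihz => rw [map_mul]; exact mul_mem ihy ihz
  intro f
  have hrep : f = ∑ g ∈ f.coeff.support, ((f.coeff g : ℤ) : MonoidAlgebra ℤ G) * of ℤ G g := by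
    conv_lhs => rw [← MonoidAlgebra.sum_coeff_single f]
    rw [Finsupp.sum]
    refine Finset.sum_congr rfl fun g _ => ?_
    rw [MonoidAlgebra.of_apply, MonoidAlgebra.intCast_def, MonoidAlgebra.single_mul_single,
      one_mul, mul_one, Int.cast_id]
  rw [hrep]
  exact sum_mem fun g _ => mul_mem (intCast_mem (phi a b).range _) (hof g)

lemma pow_mul_pow_inj {p d : ℕ} (hpd : Nat.Coprime p d) {a b : G}
    (hA : orderOf a = p) (hB : orderOf b = d)
    {i k j l : ℕ} (hi : i < p) (hk : k < p) (hj : j < d) (hl : l < d)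
    (h : a ^ i * b ^ j = a ^ k * b ^ l) : i = k ∧ j = l := by
  have hap : a ^ p = 1 := hA ▸ pow_orderOf_eq_one a
  have hbd : b ^ d = 1 := hB ▸ pow_orderOf_eq_one b
  have hg : a ^ i / a ^ k = b ^ l / b ^ j := by
    rw [div_eq_div_iff_mul_eq_mul, h, mul_comm]
  have hgp : (a ^ i / a ^ k) ^ p = 1 := by
    rw [div_pow, ← pow_mul, ← pow_mul, mul_comm i p, mul_comm k p, pow_mul, pow_mul,
      hap, one_pow, one_pow, div_one]
  have hgd : (a ^ i / a ^ k) ^ d = 1 := by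
    rw [hg, div_pow, ← pow_mul, ← pow_mul, mul_comm l d, mul_comm j d, pow_mul, pow_mul,
      hbd, one_pow, one_pow, div_one]
  have hone : a ^ i / a ^ k = 1 := by
    have h1 : orderOf (a ^ i / a ^ k) ∣ p := orderOf_dvd_of_pow_eq_one hgp
    have h2 : orderOf (a ^ i / a ^ k) ∣ d := orderOf_dvd_of_pow_eq_one hgd
    have : orderOf (a ^ i / a ^ k) ∣ 1 := hpd ▸ Nat.dvd_gcd h1 h2
    exact orderOf_eq_one_iff.mp (Nat.dvd_one.mp this)
  have hik : i = k := by
    have : a ^ i = a ^ k := div_eq_one.mp hone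
    have := pow_inj_mod.mp this
    rwa [hA, Nat.mod_eq_of_lt hi, Nat.mod_eq_of_lt hk] at this
  refine ⟨hik, ?_⟩
  have hbl : b ^ l = b ^ j := div_eq_one.mp (hg ▸ hone)
  have := pow_inj_mod.mp hbl
  rw [hB, Nat.mod_eq_of_lt hl, Nat.mod_eq_of_lt hj] at this
  exact this.symm

lemma phi_ker {p d : ℕ} (hp : 0 < p) (hd : 0 < d) (hpd : Nat.Coprime p d) {a b : G}
    (hA : orderOf a = p) (hB : orderOf b = d)
    (hgen : ∀ g : G, g ∈ Subgroup.closure {a, b}) (W : Polynomial (Polynomial ℤ))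
    (hW : phi a b W = 0) :
    W ∈ Ideal.span {(C ((X : Polynomial ℤ) ^ p - 1) : Polynomial (Polynomial ℤ)), X ^ d - 1} := by
  classical
  have hap : a ^ p = 1 := hA ▸ pow_orderOf_eq_one a
  have hbd : b ^ d = 1 := hB ▸ pow_orderOf_eq_one b
  have hphia : phi a b (C ((X : Polynomial ℤ) ^ p - 1)) = 0 := by
    have h1 : (C ((X : Polynomial ℤ) ^ p - 1) : Polynomial (Polynomial ℤ))
        = (C X) ^ p - 1 := by rw [map_sub, map_pow, map_one]
    rw [h1, map_sub, map_pow, phi_CX, map_one, ← map_pow, hap, map_one, sub_self]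
  have hphib : phi a b ((X : Polynomial (Polynomial ℤ)) ^ d - 1) = 0 := by
    rw [map_sub, map_pow, phi_X, map_one, ← map_pow, hbd, map_one, sub_self]
  have hmonicd : ((X : Polynomial (Polynomial ℤ)) ^ d - 1).Monic := by
    simpa using monic_X_pow_sub_C (1 : Polynomial ℤ) hd.ne'
  have hmonicp : ((X : Polynomial ℤ) ^ p - 1).Monic := by
    simpa using monic_X_pow_sub_C (1 : ℤ) hp.ne'
  set Md : Polynomial (Polynomial ℤ) := X ^ d - 1 with hMd
  set Mp : Polynomial ℤ := X ^ p - 1 with hMp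
  have hJ1 : (C ((X : Polynomial ℤ) ^ p - 1) : Polynomial (Polynomial ℤ))
      ∈ Ideal.span {(C ((X : Polynomial ℤ) ^ p - 1) : Polynomial (Polynomial ℤ)), Md} :=
    Ideal.subset_span (by simp)
  have hJ2 : Md ∈ Ideal.span {(C ((X : Polynomial ℤ) ^ p - 1) : Polynomial (Polynomial ℤ)), Md} :=
    Ideal.subset_span (by simp)
  have hWsplit : W = W %ₘ Md + Md * (W /ₘ Md) := (modByMonic_add_div W Md).symm
  have hphiW1 : phi a b (W %ₘ Md) = 0 := by
    have h2 := congrArg (phi a b) hWsplit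
    rw [map_add, map_mul, hphib, zero_mul, add_zero, hW] at h2
    exact h2.symm
  have hdeg1 : (W %ₘ Md).natDegree < d := by
    rcases eq_or_ne (W %ₘ Md) 0 with h | h
    · simpa [h] using hd
    · have h3 := degree_modByMonic_lt W hmonicd
      have hdd : Md.degree = d := by
        rw [hMd]; simpa using degree_X_pow_sub_C hd (1 : Polynomial ℤ)
      exact (natDegree_lt_iff_degree_lt h).mpr (hdd ▸ h3)
  set r : ℕ → Polynomial ℤ := fun j => (W %ₘ Md).coeff j %ₘ Mp with hr
  have hdegr : ∀ j, (r j).natDegree < p := by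
    intro j
    rcases eq_or_ne (r j) 0 with h | h
    · simpa [h] using hp
    · have h3 := degree_modByMonic_lt ((W %ₘ Md).coeff j) hmonicp
      have hdd : Mp.degree = p := by
        rw [hMp]; simpa using degree_X_pow_sub_C hp (1 : ℤ)
      exact (natDegree_lt_iff_degree_lt h).mpr (hdd ▸ h3)
  set W₂ : Polynomial (Polynomial ℤ) := ∑ j ∈ range d, C (r j) * X ^ j with hW₂
  have hW12 : W %ₘ Md - W₂ = C Mp * ∑ j ∈ range d, C ((W %ₘ Md).coeff j /ₘ Mp) * X ^ j := by
    conv_lhs => rw [as_sum_range' (W %ₘ Md) d hdeg1]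
    rw [hW₂, Finset.mul_sum, ← Finset.sum_sub_distrib]
    refine Finset.sum_congr rfl fun j _ => ?_
    have hcr : (W %ₘ Md).coeff j - r j = Mp * ((W %ₘ Md).coeff j /ₘ Mp) := by
      conv_lhs => rw [← modByMonic_add_div ((W %ₘ Md).coeff j) Mp]
      rw [hr]; ring
    rw [← C_mul_X_pow_eq_monomial, ← sub_mul, ← C_sub, hcr, map_mul, mul_assoc]
  have hphiW2 : phi a b W₂ = 0 := by
    have h3 := congrArg (phi a b) hW12
    rw [map_sub, map_mul, hphia, zero_mul, hphiW1, zero_sub, neg_eq_zero] at h3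
    exact h3
  have halg : ∀ c : ℤ, algebraMap ℤ (MonoidAlgebra ℤ G) c = MonoidAlgebra.single (1 : G) c := by
    intro c
    simp [algebraMap_int_eq, MonoidAlgebra.intCast_def]
  have heq : phi a b W₂ = ∑ j ∈ range d, ∑ i ∈ range p,
      (MonoidAlgebra.single (a ^ i * b ^ j) ((r j).coeff i) : MonoidAlgebra ℤ G) := by
    rw [hW₂, map_sum]
    refine Finset.sum_congr rfl fun j _ => ?_
    rw [map_mul, map_pow, phi_X, phi_C,
      eval₂_eq_sum_range' (algebraMap ℤ (MonoidAlgebra ℤ G)) (hdegr j) (of ℤ G a),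
      Finset.sum_mul]
    refine Finset.sum_congr rfl fun i _ => ?_
    rw [MonoidAlgebra.of_apply, MonoidAlgebra.of_apply, MonoidAlgebra.single_pow,
      MonoidAlgebra.single_pow, one_pow, one_pow, halg,
      MonoidAlgebra.single_mul_single, MonoidAlgebra.single_mul_single,
      one_mul, mul_one, mul_one]
  have hcoeff : ∀ i0, i0 < p → ∀ j0, j0 < d → (r j0).coeff i0 = 0 := by
    intro i0 hi0 j0 hj0
    have h0 : (∑ j ∈ range d, ∑ i ∈ range p,
        (MonoidAlgebra.single (a ^ i * b ^ j) ((r j).coeff i) : MonoidAlgebra ℤ G)).coeff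
          (a ^ i0 * b ^ j0) = 0 := by
      rw [← heq, hphiW2]; rfl
    simp only [MonoidAlgebra.coeff_sum, MonoidAlgebra.coeff_single] at h0
    rw [Finsupp.finset_sum_apply,
      Finset.sum_eq_single_of_mem j0 (mem_range.mpr hj0)] at h0
    · rw [Finsupp.finset_sum_apply,
        Finset.sum_eq_single_of_mem i0 (mem_range.mpr hi0)] at h0
      · rwa [Finsupp.single_apply, if_pos rfl] at h0
      · intro i hi hne
        rw [Finsupp.single_apply, if_neg]
        intro hcontra
        exact hne (pow_mul_pow_inj hpd hA hB (mem_range.mp hi) hi0 hj0 hj0 hcontra).1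
    · intro j hj hne
      rw [Finsupp.finset_sum_apply]
      refine Finset.sum_eq_zero fun i hi => ?_
      rw [Finsupp.single_apply, if_neg]
      intro hcontra
      exact hne (pow_mul_pow_inj hpd hA hB (mem_range.mp hi) hi0 (mem_range.mp hj) hj0 hcontra).2
  have hW2zero : W₂ = 0 := by
    rw [hW₂]
    refine Finset.sum_eq_zero fun j hj => ?_
    have : r j = 0 := by
      apply Polynomial.ext
      intro i
      rcases lt_or_ge i p with h | h
      · simpa using hcoeff i h j (mem_range.mp hj)
      · rw [coeff_eq_zero_of_natDegree_lt (lt_of_lt_of_le (hdegr j) h), Polynomial.coeff_zero]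
    rw [this, map_zero, zero_mul]
  have hfin : W = (W - W %ₘ Md) + (W %ₘ Md - W₂) + W₂ := by ring
  rw [hfin]
  refine Ideal.add_mem _ (Ideal.add_mem _ ?_ ?_) (by rw [hW2zero]; exact Ideal.zero_mem _)
  · have h4 : W - W %ₘ Md = Md * (W /ₘ Md) := by
      rw [sub_eq_iff_eq_add, add_comm]
      exact hWsplit
    rw [h4]
    exact Ideal.mul_mem_right _ _ hJ2
  · rw [hW12]
    exact Ideal.mul_mem_right _ _ hJ1

lemma hard {p d : ℕ} (hp : 0 < p) (hd : 0 < d) (hpd : Nat.Coprime p d) {a b : G}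
    (hA : orderOf a = p) (hB : orderOf b = d)
    (hgen : ∀ g : G, g ∈ Subgroup.closure {a, b}) (u w : MonoidAlgebra ℤ G)
    (hrel : u * (of ℤ G b - 1) + w * (of ℤ G a - 1) = 0) :
    ∃ h g f : MonoidAlgebra ℤ G,
      u = h * (of ℤ G a - 1) + g * (∑ j ∈ Finset.range d, of ℤ G b ^ j) ∧
      w = h * (-(of ℤ G b - 1)) + f * (∑ i ∈ Finset.range p, of ℤ G a ^ i) := by
  classical
  have ha0 : orderOf a ≠ 0 := by rw [hA]; exact hp.ne'
  have hb0 : orderOf b ≠ 0 := by rw [hB]; exact hd.ne'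
  obtain ⟨U, hU⟩ := phi_surjective ha0 hb0 hgen u
  obtain ⟨V, hV⟩ := phi_surjective ha0 hb0 hgen w
  have hK : phi a b (U * (X - 1) + V * (C X - 1)) = 0 := by
    rw [map_add, map_mul, map_mul, map_sub, map_sub, phi_X, phi_CX, map_one, hU, hV, hrel]
  have hmem := phi_ker hp hd hpd hA hB hgen _ hK
  rw [Ideal.mem_span_pair] at hmem
  obtain ⟨F, G2, hFG⟩ := hmem
  set Tx : Polynomial ℤ := ∑ i ∈ Finset.range p, X ^ i with hTx
  set Ty : Polynomial (Polynomial ℤ) := ∑ j ∈ Finset.range d, X ^ j with hTy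
  have hgx : (C ((X : Polynomial ℤ) ^ p - 1) : Polynomial (Polynomial ℤ))
      = C Tx * (C X - 1) := by
    rw [hTx, ← geom_sum_mul, map_mul, map_sub, map_one]
  have hgy : ((X : Polynomial (Polynomial ℤ)) ^ d - 1) = Ty * (X - 1) := by
    rw [hTy, geom_sum_mul]
  have heq2 : (U - G2 * Ty) * (X - 1) = (F * C Tx - V) * (C X - 1) := by
    linear_combination (-1 : Polynomial (Polynomial ℤ)) * hFG + F * hgx + G2 * hgy
  have hCX1 : (C X - 1 : Polynomial (Polynomial ℤ)) = C ((X : Polynomial ℤ) - 1) := by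
    rw [map_sub, map_one]
  have hprime : Prime (C ((X : Polynomial ℤ) - 1) : Polynomial (Polynomial ℤ)) := by
    rw [Polynomial.prime_C_iff]
    simpa using prime_X_sub_C (1 : ℤ)
  have hnd : ¬ (C ((X : Polynomial ℤ) - 1) : Polynomial (Polynomial ℤ)) ∣ (X - 1) := by
    rintro ⟨c, hc⟩
    have h5 := congrArg (Polynomial.map (evalRingHom (1 : ℤ))) hc
    simp only [Polynomial.map_mul, Polynomial.map_sub, Polynomial.map_one, Polynomial.map_X,
      map_C] at h5
    simp only [eval_sub, eval_one, eval_X, coe_evalRingHom, sub_self, map_zero, zero_mul] at h5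
    have h6 := congrArg (fun q => Polynomial.coeff q 1) h5
    simp [Polynomial.coeff_one] at h6
  have hdvd : (C ((X : Polynomial ℤ) - 1) : Polynomial (Polynomial ℤ)) ∣ (U - G2 * Ty) := by
    have h6 : (C ((X : Polynomial ℤ) - 1) : Polynomial (Polynomial ℤ))
        ∣ (U - G2 * Ty) * (X - 1) := ⟨F * C Tx - V, by rw [heq2, hCX1]; ring⟩
    rcases hprime.2.2 _ _ h6 with h | h
    · exact h
    · exact absurd h hnd
  obtain ⟨H, hH⟩ := hdvd
  have hcancel : H * (X - 1) = F * C Tx - V := by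
    have h7 : C ((X : Polynomial ℤ) - 1) * (H * (X - 1))
        = C ((X : Polynomial ℤ) - 1) * (F * C Tx - V) := by
      rw [← mul_assoc, ← hH, heq2, hCX1]
      ring
    exact mul_left_cancel₀ hprime.ne_zero h7
  have hUeq : U = G2 * Ty + C ((X : Polynomial ℤ) - 1) * H := by
    rw [← hH]; ring
  have hVeq : V = F * C Tx - H * (X - 1) := by linear_combination hcancel
  have hphiTy : phi a b Ty = ∑ j ∈ Finset.range d, of ℤ G b ^ j := by
    rw [hTy, map_sum]
    exact Finset.sum_congr rfl fun j _ => by rw [map_pow, phi_X]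
  have hphiTx : phi a b (C Tx) = ∑ i ∈ Finset.range p, of ℤ G a ^ i := by
    have : (C Tx : Polynomial (Polynomial ℤ)) = ∑ i ∈ Finset.range p, (C X) ^ i := by
      rw [hTx, map_sum]
      exact Finset.sum_congr rfl fun i _ => by rw [map_pow]
    rw [this, map_sum]
    exact Finset.sum_congr rfl fun i _ => by rw [map_pow, phi_CX]
  have hphiCX1 : phi a b (C ((X : Polynomial ℤ) - 1)) = of ℤ G a - 1 := by
    rw [← hCX1, map_sub, phi_CX, map_one]
  have hphiX1 : phi a b ((X : Polynomial (Polynomial ℤ)) - 1) = of ℤ G b - 1 := by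
    rw [map_sub, phi_X, map_one]
  refine ⟨phi a b H, phi a b G2, phi a b F, ?_, ?_⟩
  · rw [← hU, hUeq, map_add, map_mul, map_mul, hphiTy, hphiCX1]
    ring
  · rw [← hV, hVeq, map_sub, map_mul, map_mul, hphiTx, hphiX1]
    ring

end KernelDeltaTwoAux

/-- **Lemma 4.1.5** (Bley–Cobbe): let `G = ⟨a⟩ × ⟨b⟩` with `ord(a) = p`, `ord(b) = d`,
`gcd(p,d) = 1`, and let `δ₂ : ℤ[G]z₁ ⊕ ℤ[G]z₂ → ℤ[G]z₀` be given by
`δ₂(z₁) = (b-1)z₀`, `δ₂(z₂) = (a-1)z₀`.  Then `ker δ₂` is generated as a `ℤ[G]`-module by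
`(a-1)z₁ - (b-1)z₂`, `T_b·z₁` and `T_a·z₂`. -/
theorem kernel_delta_two_generators
    (p d : ℕ) (hp : 0 < p) (hd : 0 < d) (hpd : Nat.Coprime p d)
    (G : Type*) [CommGroup G] (a b : G)
    (hA : orderOf a = p) (hB : orderOf b = d)
    (hgen : ∀ g : G, g ∈ Subgroup.closure {a, b}) :
    ∀ v : MonoidAlgebra ℤ G × MonoidAlgebra ℤ G,
      (v.1 * (MonoidAlgebra.of ℤ G b - 1) + v.2 * (MonoidAlgebra.of ℤ G a - 1) = 0 ↔
        v ∈ Submodule.span (MonoidAlgebra ℤ G)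
          ({(MonoidAlgebra.of ℤ G a - 1, -(MonoidAlgebra.of ℤ G b - 1)),
            (∑ j ∈ range d, MonoidAlgebra.of ℤ G b ^ j, 0),
            (0, ∑ i ∈ range p, MonoidAlgebra.of ℤ G a ^ i)} :
            Set (MonoidAlgebra ℤ G × MonoidAlgebra ℤ G))) := by
  classical
  have hbd : b ^ d = 1 := hB ▸ pow_orderOf_eq_one b
  have hap : a ^ p = 1 := hA ▸ pow_orderOf_eq_one a
  intro v
  constructor
  · intro hrel
    obtain ⟨h, g, f, hu, hw⟩ := KernelDeltaTwoAux.hard hp hd hpd hA hB hgen v.1 v.2 hrel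
    have hv : v = h • ((MonoidAlgebra.of ℤ G a - 1, -(MonoidAlgebra.of ℤ G b - 1)) :
          MonoidAlgebra ℤ G × MonoidAlgebra ℤ G)
        + g • ((∑ j ∈ range d, MonoidAlgebra.of ℤ G b ^ j, 0) :
          MonoidAlgebra ℤ G × MonoidAlgebra ℤ G)
        + f • (((0 : MonoidAlgebra ℤ G), ∑ i ∈ range p, MonoidAlgebra.of ℤ G a ^ i) :
          MonoidAlgebra ℤ G × MonoidAlgebra ℤ G) := by
      apply Prod.ext
      · simp only [Prod.fst_add, Prod.smul_fst, smul_eq_mul, mul_zero, add_zero]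
        rw [hu]
        all_goals ring
      · simp only [Prod.snd_add, Prod.smul_snd, smul_eq_mul, mul_zero]
        rw [hw]
        all_goals ring
    rw [hv]
    refine Submodule.add_mem _ (Submodule.add_mem _ ?_ ?_) ?_
    · exact Submodule.smul_mem _ _ (Submodule.subset_span (by simp))
    · exact Submodule.smul_mem _ _ (Submodule.subset_span (by simp))
    · exact Submodule.smul_mem _ _ (Submodule.subset_span (by simp))
  · intro hv
    let L : MonoidAlgebra ℤ G × MonoidAlgebra ℤ G →ₗ[MonoidAlgebra ℤ G] MonoidAlgebra ℤ G :=
      { toFun := fun x => x.1 * (MonoidAlgebra.of ℤ G b - 1) + x.2 * (MonoidAlgebra.of ℤ G a - 1)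
        map_add' := fun x y => by
          simp only [Prod.fst_add, Prod.snd_add]
          ring
        map_smul' := fun c x => by
          simp only [Prod.smul_fst, Prod.smul_snd, smul_eq_mul, RingHom.id_apply]
          ring }
    have hsub : Submodule.span (MonoidAlgebra ℤ G)
        ({(MonoidAlgebra.of ℤ G a - 1, -(MonoidAlgebra.of ℤ G b - 1)),
          (∑ j ∈ range d, MonoidAlgebra.of ℤ G b ^ j, 0),
          (0, ∑ i ∈ range p, MonoidAlgebra.of ℤ G a ^ i)} :
          Set (MonoidAlgebra ℤ G × MonoidAlgebra ℤ G)) ≤ LinearMap.ker L := by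
      rw [Submodule.span_le]
      rintro x hx
      simp only [Set.mem_insert_iff, Set.mem_singleton_iff] at hx
      rcases hx with rfl | rfl | rfl
      · rw [SetLike.mem_coe, LinearMap.mem_ker]
        show (MonoidAlgebra.of ℤ G a - 1) * (MonoidAlgebra.of ℤ G b - 1)
          + (-(MonoidAlgebra.of ℤ G b - 1)) * (MonoidAlgebra.of ℤ G a - 1) = 0
        ring
      · rw [SetLike.mem_coe, LinearMap.mem_ker]
        show (∑ j ∈ range d, MonoidAlgebra.of ℤ G b ^ j) * (MonoidAlgebra.of ℤ G b - 1)
          + 0 * (MonoidAlgebra.of ℤ G a - 1) = 0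
        rw [geom_sum_mul, zero_mul, add_zero, ← map_pow, hbd, map_one, sub_self]
      · rw [SetLike.mem_coe, LinearMap.mem_ker]
        show 0 * (MonoidAlgebra.of ℤ G b - 1)
          + (∑ i ∈ range p, MonoidAlgebra.of ℤ G a ^ i) * (MonoidAlgebra.of ℤ G a - 1) = 0
        rw [geom_sum_mul, zero_mul, zero_add, ← map_pow, hap, map_one, sub_self]
    exact LinearMap.mem_ker.mp (hsub hv)
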